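/- If A is a K×K real symmetric doubly-stochastic primitive matrix, γ > 0, and λ = max{|1 - K/γ|, ρ₂} where ρ₂ is the second largest eigenvalue modulus of A, then for every column k, Σ_{ℓ=1}^K |1 - γ A_{ℓk}| ≤ γ √K λ. -/

import Mathlib

open Finset Matrix

lemma sumA {K : ℕ} (A : Matrix (Fin K) (Fin K) ℝ)
    (hcol : ∀ k, ∑ ℓ, A ℓ k = 1) (v : Fin K → ℝ) :
    ∑ ℓ, A.mulVec v ℓ = ∑ j, v j := by
  simp only [Matrix.mulVec, dotProduct]
  rw [Finset.sum_comm]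
  simp [← Finset.sum_mul, hcol]

lemma keylem {K : ℕ} (hK : 0 < K) (A : Matrix (Fin K) (Fin K) ℝ)
    (hsymm : A.IsSymm)
    (hrow : ∀ ℓ, ∑ k, A ℓ k = 1)
    (hcol : ∀ k, ∑ ℓ, A ℓ k = 1)
    (ρ₂ : ℝ) (hρ₂nn : 0 ≤ ρ₂) (hρ₂lt : ρ₂ < 1)
    (hρ₂ : ∀ (μ : ℝ) (v : Fin K → ℝ), v ≠ 0 → A.mulVec v = μ • v →
      (∑ i, v i = 0) → |μ| ≤ ρ₂)
    (x : Fin K → ℝ) (hx : ∑ i, x i = 0) :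
    ∑ ℓ, (A.mulVec x ℓ)^2 ≤ ρ₂^2 * ∑ ℓ, (x ℓ)^2 := by
  have hA : A.IsHermitian := by
    rwa [Matrix.IsHermitian, Matrix.conjTranspose_eq_transpose_of_trivial]
  set b := hA.eigenvectorBasis with hb
  set μ := hA.eigenvalues with hμ
  have hmv : ∀ i, A.mulVec (fun l => b i l) = (μ i) • (fun l => b i l) := by
    intro i
    funext l
    have := congrFun (hA.mulVec_eigenvectorBasis i) l
    simpa using this
  have hone : A.mulVec (fun _ => (1:ℝ)) = fun _ => (1:ℝ) := by
    funext ℓ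
    simp [Matrix.mulVec, dotProduct, hrow]
  set xE : EuclideanSpace ℝ (Fin K) := WithLp.toLp 2 x with hxE
  set yE : EuclideanSpace ℝ (Fin K) := WithLp.toLp 2 (A.mulVec x) with hyE
  have hinner : ∀ (i : Fin K) (z : EuclideanSpace ℝ (Fin K)),
      (inner ℝ (b i) z : ℝ) = ∑ j, b i j * z j := by
    intro i z
    simp [PiLp.inner_apply, RCLike.inner_apply, mul_comm]
  have hrepr : ∀ i, b.repr yE i = μ i * b.repr xE i := by
    intro i
    rw [b.repr_apply_apply, b.repr_apply_apply, hinner, hinner]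
    have h1 : ∑ j, b i j * yE j = (fun l => b i l) ⬝ᵥ (A.mulVec x) := rfl
    rw [h1, dotProduct_mulVec, ← Matrix.mulVec_transpose, hsymm, hmv i]
    simp [dotProduct, Finset.mul_sum, mul_assoc, hxE]
  have hcase : ∀ i, (μ i)^2 * (b.repr xE i)^2 ≤ ρ₂^2 * (b.repr xE i)^2 := by
    intro i
    by_cases h1 : μ i = 1
    · have hsi : ∀ j j' : Fin K, b i j = b i j' := by
        intro j j'
        by_contra hne
        set u : Fin K → ℝ := fun l => (K:ℝ) * b i l - (∑ m, b i m) with hu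
        have hAu : A.mulVec u = (1:ℝ) • u := by
          have he : u = (K:ℝ) • (fun l => b i l) - (∑ m, b i m) • (fun _ => (1:ℝ)) := by
            funext l; simp [hu]
          rw [he, one_smul, Matrix.mulVec_sub, Matrix.mulVec_smul, Matrix.mulVec_smul,
            hone, hmv i, h1, one_smul]
        have hsu : ∑ l, u l = 0 := by
          simp [hu, Finset.sum_sub_distrib, ← Finset.mul_sum, Finset.card_univ, mul_comm]
        have hune : u ≠ 0 := by
          intro h0
          apply hne
          have hj := congrFun h0 j
          have hj' := congrFun h0 j'
          simp only [hu, Pi.zero_apply, sub_eq_zero] at hj hj'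
          have hKne : (K:ℝ) ≠ 0 := Nat.cast_ne_zero.mpr hK.ne'
          exact mul_left_cancel₀ hKne (hj.trans hj'.symm)
        have := hρ₂ 1 u hune hAu hsu
        simp at this
        linarith
      have hz : b.repr xE i = 0 := by
        rw [b.repr_apply_apply, hinner]
        obtain ⟨j0⟩ : Nonempty (Fin K) := ⟨⟨0, hK⟩⟩
        have hc : ∀ j ∈ Finset.univ, b i j * xE j = b i j0 * xE j :=
          fun j _ => by rw [hsi j j0]
        rw [Finset.sum_congr rfl hc, ← Finset.mul_sum, hx, mul_zero]
      rw [hz]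
      simp
    · have hbne : (fun l => b i l : Fin K → ℝ) ≠ 0 := by
        intro h0
        exact b.toBasis.ne_zero i (by ext j; exact congrFun h0 j)
      have h := sumA A hcol (fun l => b i l)
      rw [hmv i] at h
      simp only [Pi.smul_apply, smul_eq_mul] at h
      rw [← Finset.mul_sum] at h
      have h' : μ i * (∑ j, b i j) = ∑ j, b i j := h
      have h2 : (μ i - 1) * (∑ j, b i j) = 0 := by
        rw [sub_mul, one_mul, h', sub_self]
      have hsb : ∑ j, b i j = 0 := by
        rcases mul_eq_zero.mp h2 with h3 | h3
        · exact absurd (by linarith : μ i = 1) h1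
        · exact h3
      have hμle := hρ₂ (μ i) (fun l => b i l) hbne (hmv i) hsb
      have hsq : (μ i)^2 ≤ ρ₂^2 := by
        rw [← sq_abs]
        exact pow_le_pow_left₀ (abs_nonneg _) hμle 2
      exact mul_le_mul_of_nonneg_right hsq (sq_nonneg _)
  have hnorm : ∀ z : EuclideanSpace ℝ (Fin K), ‖z‖^2 = ∑ i, (z i)^2 := by
    intro z
    rw [EuclideanSpace.norm_eq, Real.sq_sqrt (by positivity)]
    simp [sq_abs]
  have hP : ∀ z : EuclideanSpace ℝ (Fin K), ∑ i, (z i)^2 = ∑ i, (b.repr z i)^2 := by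
    intro z
    rw [← hnorm z, ← b.repr.norm_map z, hnorm]
  calc ∑ ℓ, (A.mulVec x ℓ)^2 = ∑ i, (b.repr yE i)^2 := hP yE
    _ = ∑ i, (μ i)^2 * (b.repr xE i)^2 := by
        refine Finset.sum_congr rfl fun i _ => ?_; rw [hrepr i]; ring
    _ ≤ ∑ i, ρ₂^2 * (b.repr xE i)^2 := Finset.sum_le_sum (fun i _ => hcase i)
    _ = ρ₂^2 * ∑ i, (b.repr xE i)^2 := by rw [Finset.mul_sum]
    _ = ρ₂^2 * ∑ ℓ, (x ℓ)^2 := by rw [← hP xE]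

/-- For a symmetric doubly-stochastic primitive combination matrix A with second
largest eigenvalue modulus ρ₂, and γ > 0, each column satisfies
Σ_ℓ |1 - γ A_{ℓk}| ≤ γ √K max{|1 - K/γ|, ρ₂}. -/
theorem stmt10 (K : ℕ) (hK : 0 < K) (A : Matrix (Fin K) (Fin K) ℝ)
    (hsymm : A.IsSymm)
    (hnn : ∀ ℓ k, 0 ≤ A ℓ k)
    (hrow : ∀ ℓ, ∑ k, A ℓ k = 1)
    (hcol : ∀ k, ∑ ℓ, A ℓ k = 1)
    (hprim : ∃ n : ℕ, ∀ ℓ k, 0 < (A ^ n) ℓ k)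
    (ρ₂ : ℝ) (hρ₂nn : 0 ≤ ρ₂) (hρ₂lt : ρ₂ < 1)
    (hρ₂ : ∀ (μ : ℝ) (v : Fin K → ℝ), v ≠ 0 → A.mulVec v = μ • v →
      (∑ i, v i = 0) → |μ| ≤ ρ₂)
    (γ : ℝ) (hγ : 0 < γ) :
    ∀ k : Fin K, ∑ ℓ, |1 - γ * A ℓ k| ≤
      γ * Real.sqrt K * max |1 - K / γ| ρ₂ := by
  intro k
  have hKpos : (0:ℝ) < K := Nat.cast_pos.mpr hK
  have hKne : (K:ℝ) ≠ 0 := hKpos.ne'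
  set L : ℝ := max |1 - K / γ| ρ₂ with hL
  have hLnn : 0 ≤ L := le_trans hρ₂nn (le_max_right _ _)
  set x : Fin K → ℝ := fun ℓ => 1/K - (if ℓ = k then 1 else 0) with hxdef
  have hxsum : ∑ i, x i = 0 := by
    simp [hxdef, Finset.sum_sub_distrib, Finset.card_univ]
    field_simp
    norm_num
  have husum : ∑ ℓ, A.mulVec x ℓ = 0 := by rw [sumA A hcol, hxsum]
  have huval : ∀ ℓ, A.mulVec x ℓ = 1/K - A ℓ k := by
    intro ℓ
    simp only [Matrix.mulVec, dotProduct, hxdef, mul_sub, Finset.sum_sub_distrib,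
      mul_ite, mul_one, mul_zero, Finset.sum_ite_eq', Finset.mem_univ, if_true]
    rw [← Finset.sum_mul, hrow ℓ, one_mul]
  have hxsq : ∑ ℓ, (x ℓ)^2 = 1 - 1/K := by
    have hterm : ∀ ℓ, (x ℓ)^2 =
        1/K^2 - (2/K)*(if ℓ = k then 1 else 0) + (if ℓ = k then 1 else 0) := by
      intro ℓ; by_cases h : ℓ = k <;> simp [hxdef, h] <;> ring
    rw [Finset.sum_congr rfl (fun ℓ _ => hterm ℓ)]
    simp [Finset.sum_add_distrib, Finset.sum_sub_distrib, Finset.card_univ]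
    field_simp
    ring
  have hu2 := keylem hK A hsymm hrow hcol ρ₂ hρ₂nn hρ₂lt hρ₂ x hxsum
  rw [hxsq] at hu2
  -- bound on sum of squares of w ℓ = 1/γ - A ℓ k
  have hw2 : ∑ ℓ, (1/γ - A ℓ k)^2 ≤ L^2 := by
    have hdecomp : ∀ ℓ, 1/γ - A ℓ k = (1/γ - 1/K) + A.mulVec x ℓ := by
      intro ℓ; rw [huval ℓ]; ring
    have hexp : ∑ ℓ, (1/γ - A ℓ k)^2 =
        K * (1/γ - 1/K)^2 + 2*(1/γ - 1/K) * (∑ ℓ, A.mulVec x ℓ)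
          + ∑ ℓ, (A.mulVec x ℓ)^2 := by
      rw [Finset.sum_congr rfl (fun ℓ _ => by rw [hdecomp ℓ])]
      simp [add_sq, Finset.sum_add_distrib, Finset.card_univ, Finset.mul_sum, mul_assoc]
    rw [hexp, husum, mul_zero, add_zero]
    have h1 : K * (1/γ - 1/K)^2 = (1 - K/γ)^2 / K := by
      field_simp; ring
    have h2 : (1 - K/γ)^2 ≤ L^2 := by
      rw [← sq_abs (1 - K/γ)]
      exact pow_le_pow_left₀ (abs_nonneg _) (le_max_left _ _) 2
    have h3 : ρ₂^2 ≤ L^2 := pow_le_pow_left₀ hρ₂nn (le_max_right _ _) 2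
    have h4 : (0:ℝ) ≤ 1 - 1/K := by
      rw [sub_nonneg, div_le_one hKpos]
      exact_mod_cast Nat.one_le_cast.mpr hK
    have h5 : ∑ ℓ, (A.mulVec x ℓ)^2 ≤ L^2 * (1 - 1/K) :=
      hu2.trans (mul_le_mul_of_nonneg_right h3 h4)
    have h6 : K * (1/γ - 1/K)^2 ≤ L^2 / K := by
      rw [h1]; gcongr
    calc K * (1/γ - 1/K)^2 + ∑ ℓ, (A.mulVec x ℓ)^2
        ≤ L^2 / K + L^2 * (1 - 1/K) := add_le_add h6 h5
      _ = L^2 := by field_simp; ring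
  -- Cauchy-Schwarz step
  have hcs : ∑ ℓ, |1/γ - A ℓ k| ≤ Real.sqrt K * L := by
    have hsq : (∑ ℓ, |1/γ - A ℓ k|)^2 ≤ K * L^2 := by
      have := sq_sum_le_card_mul_sum_sq (s := (Finset.univ : Finset (Fin K)))
        (f := fun ℓ => |1/γ - A ℓ k|)
      simp only [Finset.card_univ, Fintype.card_fin, sq_abs] at this
      calc (∑ ℓ, |1/γ - A ℓ k|)^2 ≤ K * ∑ ℓ, (1/γ - A ℓ k)^2 := this
        _ ≤ K * L^2 := mul_le_mul_of_nonneg_left hw2 hKpos.le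
    have hnn' : 0 ≤ ∑ ℓ, |1/γ - A ℓ k| :=
      Finset.sum_nonneg fun ℓ _ => abs_nonneg _
    have := Real.sqrt_le_sqrt hsq
    rw [Real.sqrt_sq hnn', Real.sqrt_mul hKpos.le, Real.sqrt_sq hLnn] at this
    exact this
  have hconv : ∀ ℓ, |1 - γ * A ℓ k| = γ * |1/γ - A ℓ k| := by
    intro ℓ
    rw [← abs_of_pos hγ, ← abs_mul, abs_of_pos hγ]
    congr 1
    field_simp
  calc ∑ ℓ, |1 - γ * A ℓ k| = γ * ∑ ℓ, |1/γ - A ℓ k| := by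
        rw [Finset.mul_sum]; exact Finset.sum_congr rfl fun ℓ _ => hconv ℓ
    _ ≤ γ * (Real.sqrt K * L) := mul_le_mul_of_nonneg_left hcs hγ.le
    _ = γ * Real.sqrt K * L := by ring
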